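/- Let S be a regular semigroup with finitely many left and right ideals, so that J = D in S. Then the number of J-classes of S is finite, and if S has at least two J-classes with maximal J-class J_M, then T = S \ J_M is a regular subsemigroup of S that is an ideal, and T has strictly fewer J-classes than S. -/
import Mathlib


/-- Green's R relation on a semigroup: `x R y ↔ xS¹ = yS¹`. -/
def GreenR {S : Type*} [Semigroup S] (x y : S) : Prop :=
  (y = x ∨ ∃ u, y = x * u) ∧ (x = y ∨ ∃ v, x = y * v)

/-- Green's L relation on a semigroup: `x L y ↔ S¹x = S¹y`. -/
def GreenL {S : Type*} [Semigroup S] (x y : S) : Prop :=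
  (y = x ∨ ∃ u, y = u * x) ∧ (x = y ∨ ∃ v, x = v * y)

/-- The J preorder: `JPre x y ↔ S¹xS¹ ⊆ S¹yS¹`, i.e. `x ∈ S¹yS¹`. -/
def JPre {S : Type*} [Semigroup S] (x y : S) : Prop :=
  x = y ∨ (∃ a, x = a * y) ∨ (∃ b, x = y * b) ∨ (∃ a b, x = a * y * b)

/-- Green's J relation. -/
def GreenJ {S : Type*} [Semigroup S] (x y : S) : Prop := JPre x y ∧ JPre y x

/-- Green's D relation: `D = R ∘ L`. -/
def GreenD {S : Type*} [Semigroup S] (x y : S) : Prop :=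
  ∃ z, GreenR x z ∧ GreenL z y

section Aux

variable {S : Type*} [Semigroup S]

lemma jpre_refl (x : S) : JPre x x := Or.inl rfl

lemma jpre_trans {x y z : S} (h1 : JPre x y) (h2 : JPre y z) : JPre x z := by
  rcases h1 with rfl | ⟨a, rfl⟩ | ⟨b, rfl⟩ | ⟨a, b, rfl⟩ <;>
    rcases h2 with rfl | ⟨c, rfl⟩ | ⟨d, rfl⟩ | ⟨c, d, rfl⟩
  · exact jpre_refl _
  · exact Or.inr (Or.inl ⟨c, rfl⟩)
  · exact Or.inr (Or.inr (Or.inl ⟨d, rfl⟩))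
  · exact Or.inr (Or.inr (Or.inr ⟨c, d, rfl⟩))
  · exact Or.inr (Or.inl ⟨a, rfl⟩)
  · exact Or.inr (Or.inl ⟨a * c, by simp [mul_assoc]⟩)
  · exact Or.inr (Or.inr (Or.inr ⟨a, d, by simp [mul_assoc]⟩))
  · exact Or.inr (Or.inr (Or.inr ⟨a * c, d, by simp [mul_assoc]⟩))
  · exact Or.inr (Or.inr (Or.inl ⟨b, rfl⟩))
  · exact Or.inr (Or.inr (Or.inr ⟨c, b, by simp [mul_assoc]⟩))
  · exact Or.inr (Or.inr (Or.inl ⟨d * b, by simp [mul_assoc]⟩))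
  · exact Or.inr (Or.inr (Or.inr ⟨c, d * b, by simp [mul_assoc]⟩))
  · exact Or.inr (Or.inr (Or.inr ⟨a, b, rfl⟩))
  · exact Or.inr (Or.inr (Or.inr ⟨a * c, b, by simp [mul_assoc]⟩))
  · exact Or.inr (Or.inr (Or.inr ⟨a, d * b, by simp [mul_assoc]⟩))
  · exact Or.inr (Or.inr (Or.inr ⟨a * c, d * b, by simp [mul_assoc]⟩))

lemma greenJ_refl (x : S) : GreenJ x x := ⟨jpre_refl x, jpre_refl x⟩

lemma greenJ_symm {x y : S} (h : GreenJ x y) : GreenJ y x := ⟨h.2, h.1⟩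

lemma greenJ_trans {x y z : S} (h1 : GreenJ x y) (h2 : GreenJ y z) : GreenJ x z :=
  ⟨jpre_trans h1.1 h2.1, jpre_trans h2.2 h1.2⟩

lemma jclass_eq_of_greenJ {x y : S} (h : GreenJ x y) :
    {z | GreenJ x z} = {z | GreenJ y z} := by
  ext z
  exact ⟨fun hz => greenJ_trans (greenJ_symm h) hz, fun hz => greenJ_trans h hz⟩

/-- The principal left ideal `S¹x`. -/
def pli (x : S) : Set S := {y | y = x ∨ ∃ u, y = u * x}

lemma jclass_eq_of_pli_eq {x y : S} (h : pli x = pli y) :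
    {z | GreenJ x z} = {z | GreenJ y z} := by
  have hy : y ∈ pli x := h ▸ Or.inl rfl
  have hx : x ∈ pli y := h.symm ▸ Or.inl rfl
  have hxy : JPre x y := by
    rcases hx with h' | ⟨u, h'⟩
    · exact Or.inl h'
    · exact Or.inr (Or.inl ⟨u, h'⟩)
  have hyx : JPre y x := by
    rcases hy with h' | ⟨u, h'⟩
    · exact Or.inl h'
    · exact Or.inr (Or.inl ⟨u, h'⟩)
  exact jclass_eq_of_greenJ ⟨hxy, hyx⟩

lemma jclass_range_finite
    (hLfin : {L : Set S | L.Nonempty ∧ ∀ s : S, ∀ x ∈ L, s * x ∈ L}.Finite) :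
    (Set.range fun x : S => {y | GreenJ x y}).Finite := by
  have hpli : (Set.range (pli : S → Set S)).Finite := by
    refine hLfin.subset ?_
    rintro L ⟨x, rfl⟩
    refine ⟨⟨x, Or.inl rfl⟩, fun s y hy => ?_⟩
    rcases hy with rfl | ⟨u, rfl⟩
    · exact Or.inr ⟨s, rfl⟩
    · exact Or.inr ⟨s * u, (mul_assoc s u x).symm⟩
  set F : Set S → Set S := fun L => ⋃ x ∈ {x' : S | pli x' = L}, {z | GreenJ x z} with hF
  have hFg : ∀ x : S, F (pli x) = {z | GreenJ x z} := by
    intro x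
    apply subset_antisymm
    · intro z hz
      simp only [hF, Set.mem_iUnion, Set.mem_setOf_eq] at hz
      obtain ⟨x', hx', hz⟩ := hz
      exact (jclass_eq_of_pli_eq hx') ▸ hz
    · intro z hz
      exact Set.mem_biUnion (show pli x = pli x from rfl) hz
  refine (hpli.image F).subset ?_
  rintro C ⟨x, rfl⟩
  exact ⟨pli x, ⟨x, rfl⟩, hFg x⟩

end Aux

/-- A regular semigroup `S` with finitely many left and right
ideals (so `J = D`) has finitely many J-classes; and if `S` has at least two
J-classes and `J_M` is a maximal J-class, then `T = S \ J_M` is a regular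
ideal of `S` with strictly fewer J-classes than `S`. -/
theorem regular_complement_of_maximal_Jclass {S : Type*} [Semigroup S]
    (hreg : ∀ x : S, ∃ y : S, x * y * x = x)
    (hLfin : {L : Set S | L.Nonempty ∧ ∀ s : S, ∀ x ∈ L, s * x ∈ L}.Finite)
    (hRfin : {R : Set S | R.Nonempty ∧ ∀ s : S, ∀ x ∈ R, x * s ∈ R}.Finite)
    (hJD : ∀ x y : S, GreenJ x y ↔ GreenD x y) :
    (Set.range fun x : S => {y | GreenJ x y}).Finite ∧
    ∀ m : S, (∀ x : S, JPre m x → JPre x m) → (∃ x : S, ¬ GreenJ m x) →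
      (∀ t : S, ¬ GreenJ m t → ∀ s : S, ¬ GreenJ m (s * t) ∧ ¬ GreenJ m (t * s)) ∧
      (∀ t : S, ¬ GreenJ m t → ∃ y : S, ¬ GreenJ m y ∧ t * y * t = t) ∧
      Set.ncard {C : Set S | ∃ x : S, ¬ GreenJ m x ∧ C = {y | GreenJ x y}} <
        Set.ncard {C : Set S | ∃ x : S, C = {y | GreenJ x y}} := by
  have hfin := jclass_range_finite hLfin
  refine ⟨hfin, fun m hmax _hex => ?_⟩
  refine ⟨?_, ?_, ?_⟩
  · -- T is an ideal
    intro t ht s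
    constructor
    · intro h
      have hst : JPre (s * t) t := Or.inr (Or.inl ⟨s, rfl⟩)
      have hmt : JPre m t := jpre_trans h.1 hst
      exact ht ⟨hmt, hmax t hmt⟩
    · intro h
      have hts : JPre (t * s) t := Or.inr (Or.inr (Or.inl ⟨s, rfl⟩))
      have hmt : JPre m t := jpre_trans h.1 hts
      exact ht ⟨hmt, hmax t hmt⟩
  · -- T is regular
    intro t ht
    obtain ⟨y, hy⟩ := hreg t
    refine ⟨y * t * y, ?_, ?_⟩
    · intro h
      have hwt : JPre (y * t * y) t := Or.inr (Or.inr (Or.inr ⟨y, y, rfl⟩))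
      have hmt : JPre m t := jpre_trans h.1 hwt
      exact ht ⟨hmt, hmax t hmt⟩
    · have h1 : t * (y * t * y) * t = (t * y * t) * (y * t) := by simp [mul_assoc]
      rw [h1, hy, ← mul_assoc, hy]
  · -- strictly fewer J-classes
    have hbig : {C : Set S | ∃ x : S, C = {y | GreenJ x y}} =
        Set.range fun x : S => {y | GreenJ x y} := by
      ext C
      simp only [Set.mem_setOf_eq, Set.mem_range, eq_comm]
    have hbigfin : {C : Set S | ∃ x : S, C = {y | GreenJ x y}}.Finite := hbig ▸ hfin
    refine Set.ncard_lt_ncard ?_ hbigfin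
    constructor
    · rintro C ⟨x, _, rfl⟩
      exact ⟨x, rfl⟩
    · intro hsub
      have hm : {y | GreenJ m y} ∈ {C : Set S | ∃ x : S, ¬ GreenJ m x ∧ C = {y | GreenJ x y}} :=
        hsub ⟨m, rfl⟩
      obtain ⟨x, hx, heq⟩ := hm
      have : m ∈ {y | GreenJ x y} := heq ▸ greenJ_refl m
      exact hx (greenJ_symm this)
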